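/- Let ε > 0, u₋ < u₊, and let f : ℝ → ℝ be continuously differentiable on [u₋, u₊]. Set m = min_{[u₋,u₊]} f and M = max_{[u₋,u₊]} f, and assume M − m < ε. Define Φ(C) = ∫_{u₋}^{u₊} √(ε² − (f(u)+C)²) / (f(u)+C) du for C ∈ (−m, ε−M). Then Φ(C) tends to +∞ as C tends to −m from the right. -/

import Mathlib

open Set Filter MeasureTheory intervalIntegral Real

lemma integral_inv_linear {L δ : ℝ} (ℓ : ℝ) (hL : 0 < L) (hδ : 0 < δ) (hℓ : 0 ≤ ℓ) :
    ∫ t in (0:ℝ)..ℓ, (L * t + δ)⁻¹ = L⁻¹ * (Real.log (L * ℓ + δ) - Real.log δ) := by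
  have key : ∀ t ∈ uIcc (0:ℝ) ℓ,
      HasDerivAt (fun t => L⁻¹ * Real.log (L * t + δ)) ((L * t + δ)⁻¹) t := by
    intro t ht
    rw [uIcc_of_le hℓ] at ht
    have hpos : 0 < L * t + δ := by nlinarith [ht.1]
    have h1 : HasDerivAt (fun t : ℝ => L * t + δ) L t := by
      simpa using ((hasDerivAt_id t).const_mul L).add_const δ
    have h2 := (h1.log hpos.ne').const_mul L⁻¹
    convert h2 using 1
    · rfl
    · rfl
    · field_simp
  have hint : IntervalIntegrable (fun t => (L * t + δ)⁻¹) volume 0 ℓ := by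
    apply ContinuousOn.intervalIntegrable
    apply ContinuousOn.inv₀ (by fun_prop)
    intro t ht
    rw [uIcc_of_le hℓ] at ht
    nlinarith [ht.1]
  rw [intervalIntegral.integral_eq_sub_of_hasDerivAt key hint]
  simp [mul_sub]

set_option maxHeartbeats 1000000 in
theorem Phi_tendsto_atTop
    (ε um up : ℝ) (hε : 0 < ε) (hlt : um < up)
    (f : ℝ → ℝ) (hf : ContDiffOn ℝ 1 f (Set.Icc um up))
    (m M : ℝ)
    (hm : IsLeast (f '' Set.Icc um up) m)
    (hM : IsGreatest (f '' Set.Icc um up) M)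
    (hMm : M - m < ε)
    (Φ : ℝ → ℝ)
    (hΦ : ∀ C : ℝ, Φ C = ∫ u in um..up, Real.sqrt (ε ^ 2 - (f u + C) ^ 2) / (f u + C)) :
    Filter.Tendsto Φ (nhdsWithin (-m) (Set.Ioi (-m))) Filter.atTop := by
  have hle : um ≤ up := hlt.le
  obtain ⟨u₀, hu₀, hfu₀⟩ := hm.1
  have hmM : m ≤ M := hm.2 hM.1
  -- Lipschitz bound
  have hd : ContinuousOn (derivWithin f (Icc um up)) (Icc um up) :=
    hf.continuousOn_derivWithin (uniqueDiffOn_Icc hlt) le_rfl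
  obtain ⟨B, hB⟩ := (isCompact_Icc).exists_bound_of_continuousOn hd
  set L : ℝ := max B 0 + 1 with hLdef
  have hL : 0 < L := by positivity
  have hlip : ∀ u ∈ Icc um up, f u - m ≤ L * |u - u₀| := by
    intro u hu
    have := Convex.norm_image_sub_le_of_norm_derivWithin_le
      (hf.differentiableOn one_ne_zero) hB (convex_Icc um up) hu₀ hu
    have h1 : |f u - f u₀| ≤ B * |u - u₀| := by simpa [Real.norm_eq_abs] using this
    have h2 : B * |u - u₀| ≤ L * |u - u₀| := by
      have : B ≤ L := by simp [hLdef]; linarith [le_max_left B 0]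
      exact mul_le_mul_of_nonneg_right this (abs_nonneg _)
    calc f u - m = f u - f u₀ := by rw [hfu₀]
      _ ≤ |f u - f u₀| := le_abs_self _
      _ ≤ L * |u - u₀| := h1.trans h2
  set ℓ : ℝ := (up - um) / 2 with hℓdef
  have hℓ : 0 < ℓ := by simp [hℓdef]; linarith
  set η : ℝ := (M - m + ε) / 2 with hηdef
  have hη0 : 0 < η := by simp [hηdef]; linarith
  have hηε : η < ε := by simp [hηdef]; linarith
  set c : ℝ := Real.sqrt (ε ^ 2 - η ^ 2) with hcdef
  have hc : 0 < c := Real.sqrt_pos.mpr (by nlinarith)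
  set δ₀ : ℝ := (ε - (M - m)) / 2 with hδ₀def
  have hδ₀ : 0 < δ₀ := by simp [hδ₀def]; linarith
  have hηδ₀ : M - m + δ₀ = η := by rw [hδ₀def, hηdef]; ring
  set φ : ℝ → ℝ := fun C => c * L⁻¹ *
    (Real.log (L * ℓ + (C + m)) - Real.log (C + m)) with hφdef
  -- the lower bound tends to atTop
  have hshift : Tendsto (fun C : ℝ => C + m) (nhdsWithin (-m) (Ioi (-m)))
      (nhdsWithin 0 (Ioi 0)) := by
    rw [tendsto_nhdsWithin_iff]
    constructor
    · have hcont : Continuous (fun C : ℝ => C + m) := by continuity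
      have : Tendsto (fun C : ℝ => C + m) (nhds (-m)) (nhds 0) := by
        simpa using hcont.tendsto (-m)
      exact this.mono_left nhdsWithin_le_nhds
    · filter_upwards [self_mem_nhdsWithin] with C hC
      simp only [mem_Ioi] at hC ⊢
      linarith
  have h1 : Tendsto (fun C : ℝ => Real.log (C + m)) (nhdsWithin (-m) (Ioi (-m))) atBot :=
    Real.tendsto_log_nhdsGT_zero.comp hshift
  have h2 : Tendsto (fun C : ℝ => Real.log (L * ℓ + (C + m)))
      (nhdsWithin (-m) (Ioi (-m))) (nhds (Real.log (L * ℓ))) := by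
    have hc2 : ContinuousAt Real.log (L * ℓ) := Real.continuousAt_log (by positivity)
    have h3 : Tendsto (fun C : ℝ => L * ℓ + (C + m)) (nhdsWithin (-m) (Ioi (-m)))
        (nhds (L * ℓ)) := by
      have hcont : Continuous (fun C : ℝ => L * ℓ + (C + m)) := by continuity
      have : Tendsto (fun C : ℝ => L * ℓ + (C + m)) (nhds (-m)) (nhds (L * ℓ)) := by
        simpa using hcont.tendsto (-m)
      exact this.mono_left nhdsWithin_le_nhds
    exact hc2.tendsto.comp h3
  have hφtop : Tendsto φ (nhdsWithin (-m) (Ioi (-m))) atTop := by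
    apply Filter.Tendsto.const_mul_atTop (by positivity : (0:ℝ) < c * L⁻¹)
    exact h2.add_atTop (tendsto_neg_atTop_iff.mpr h1) |>.congr (fun C => by ring)
  -- eventual bound φ ≤ Φ
  apply tendsto_atTop_mono' _ _ hφtop
  filter_upwards [Ioo_mem_nhdsGT_of_mem (left_mem_Ico.mpr (by linarith : -m < -m + δ₀))]
    with C hC
  obtain ⟨hC1, hC2⟩ := hC
  set δ : ℝ := C + m with hδdef
  have hδ : 0 < δ := by simp [hδdef]; linarith
  have hδδ₀ : δ < δ₀ := by simp [hδdef]; linarith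
  set g : ℝ → ℝ := fun u => Real.sqrt (ε ^ 2 - (f u + C) ^ 2) / (f u + C) with hgdef
  have hfm : ∀ u ∈ Icc um up, m ≤ f u := fun u hu => hm.2 ⟨u, hu, rfl⟩
  have hfM : ∀ u ∈ Icc um up, f u ≤ M := fun u hu => hM.2 ⟨u, hu, rfl⟩
  have hvpos : ∀ u ∈ Icc um up, 0 < f u + C := by
    intro u hu; have := hfm u hu; linarith
  have hgnn : ∀ u ∈ Icc um up, 0 ≤ g u := fun u hu =>
    div_nonneg (Real.sqrt_nonneg _) (hvpos u hu).le
  have hgcont : ContinuousOn g (Icc um up) := by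
    apply ContinuousOn.div
    · exact Real.continuous_sqrt.comp_continuousOn
        (continuousOn_const.sub (((hf.continuousOn.add continuousOn_const).pow 2)))
    · exact hf.continuousOn.add continuousOn_const
    · exact fun u hu => (hvpos u hu).ne'
  have hg_ge : ∀ u ∈ Icc um up, c / (L * |u - u₀| + δ) ≤ g u := by
    intro u hu
    have hv := hvpos u hu
    have hvle : f u + C ≤ L * |u - u₀| + δ := by
      have := hlip u hu; simp only [hδdef]; linarith
    have hvη : f u + C ≤ η := by
      have := hfM u hu
      have : f u + C ≤ M - m + δ := by simp only [hδdef]; linarith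
      linarith [hηδ₀]
    have hsq : c ≤ Real.sqrt (ε ^ 2 - (f u + C) ^ 2) := by
      apply Real.sqrt_le_sqrt
      nlinarith
    simp only [hgdef]
    gcongr
  set a : ℝ := if u₀ ≤ (um + up) / 2 then u₀ else u₀ - ℓ with hadef
  have hsub : Icc a (a + ℓ) ⊆ Icc um up := by
    rw [hadef]
    split_ifs with h
    · apply Icc_subset_Icc hu₀.1
      rw [hℓdef]; linarith
    · push_neg at h
      apply Icc_subset_Icc
      · rw [hℓdef]; linarith [hu₀.1]
      · rw [hℓdef]; linarith [hu₀.2]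
  have haa : a ≤ a + ℓ := by linarith
  set h : ℝ → ℝ := fun u => c / (L * |u - u₀| + δ) with hhdef
  have hhcont : Continuous h := by
    apply continuous_const.div
    · fun_prop
    · intro u
      have : 0 ≤ L * |u - u₀| := by positivity
      positivity
  have hgint : IntervalIntegrable g volume um up :=
    (hgcont.mono (by rw [uIcc_of_le hle])).intervalIntegrable
  have hgint2 : IntervalIntegrable g volume a (a + ℓ) :=
    ((hgcont.mono hsub).mono (by rw [uIcc_of_le haa])).intervalIntegrable
  -- step 1 : ∫ h over [a, a+ℓ] ≤ ∫ g over [a, a+ℓ]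
  have step1 : (∫ u in a..(a + ℓ), h u) ≤ ∫ u in a..(a + ℓ), g u := by
    apply intervalIntegral.integral_mono_on haa
      (hhcont.intervalIntegrable a (a + ℓ)) hgint2
    intro u hu
    exact hg_ge u (hsub hu)
  -- step 2 : ∫ g over [a, a+ℓ] ≤ ∫ g over [um, up]
  have step2 : (∫ u in a..(a + ℓ), g u) ≤ ∫ u in um..up, g u := by
    rw [intervalIntegral.integral_of_le haa, intervalIntegral.integral_of_le hle]
    apply setIntegral_mono_set
      ((intervalIntegrable_iff_integrableOn_Ioc_of_le hle).mp hgint)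
    · exact (ae_restrict_iff' measurableSet_Ioc).mpr
        (Filter.Eventually.of_forall fun u hu => hgnn u (Ioc_subset_Icc_self.trans
          (fun x hx => hx) hu))
    · exact HasSubset.Subset.eventuallyLE
        (Ioc_subset_Ioc (hsub (left_mem_Icc.mpr haa)).1 (hsub (right_mem_Icc.mpr haa)).2)
  -- step 3 : compute ∫ h
  have step3 : (∫ u in a..(a + ℓ), h u) = φ C := by
    have hcore : (∫ t in (0:ℝ)..ℓ, c * (L * t + δ)⁻¹) = φ C := by
      rw [intervalIntegral.integral_const_mul, integral_inv_linear ℓ hL hδ hℓ.le,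
        hφdef]
      simp only [hδdef]
      ring
    rw [hadef] at *
    split_ifs with hcase
    · have : (∫ u in u₀..(u₀ + ℓ), h u) = ∫ u in u₀..(u₀ + ℓ),
          (fun t => c * (L * t + δ)⁻¹) (u - u₀) := by
        apply intervalIntegral.integral_congr
        intro u hu
        rw [uIcc_of_le (by linarith : u₀ ≤ u₀ + ℓ)] at hu
        simp only [hhdef]
        rw [abs_of_nonneg (by linarith [hu.1]), div_eq_mul_inv]
      rw [this, intervalIntegral.integral_comp_sub_right (fun t => c * (L * t + δ)⁻¹) u₀]
      simpa using hcore
    · have : (∫ u in (u₀ - ℓ)..(u₀ - ℓ + ℓ), h u) = ∫ u in (u₀ - ℓ)..(u₀ - ℓ + ℓ),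
          (fun t => c * (L * t + δ)⁻¹) (u₀ - u) := by
        apply intervalIntegral.integral_congr
        intro u hu
        rw [uIcc_of_le (by linarith : u₀ - ℓ ≤ u₀ - ℓ + ℓ)] at hu
        simp only [hhdef]
        rw [abs_of_nonpos (by simp at hu; linarith [hu.2]), div_eq_mul_inv]
        ring_nf
      rw [this, intervalIntegral.integral_comp_sub_left (fun t => c * (L * t + δ)⁻¹) u₀]
      have e1 : u₀ - (u₀ - ℓ + ℓ) = 0 := by ring
      have e2 : u₀ - (u₀ - ℓ) = ℓ := by ring
      rw [e1, e2]
      exact hcore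
  rw [hΦ C]
  calc φ C = ∫ u in a..(a + ℓ), h u := step3.symm
    _ ≤ ∫ u in a..(a + ℓ), g u := step1
    _ ≤ ∫ u in um..up, g u := step2
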